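/- Let v be a weight on the unit disc and let (m_n)_{n≥1} be a strictly increasing sequence of positive integers tending to infinity such that for some constants 2 < k ≤ K one has k ≤ A(m_n, m_{n+1}) ≤ K and k ≤ B(m_n, m_{n+1}) ≤ K for every n. Then for every complex sequence (b_m)_{m=0}^∞ for which there exists f ∈ H_v^∞(𝔻) with Taylor coefficients (a_m) satisfying |b_m| ≤ |a_m| for all m, one has sup_{n≥1} v(r_{m_n}) ( Σ_{m = m_n + 1}^{m_{n+1}} |b_m|² r_{m_n}^{2m} )^{1/2} < ∞. -/

import Mathlib

open Complex Filter

/-- Coefficients of a power series convergent on the unit disc are dominated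
by a geometric sequence at each radius `r < 1`. -/
lemma sumC_aux (c : ℕ → ℂ) (f : ℂ → ℂ) (r : ℝ) (hr0 : 0 ≤ r) (hr1 : r < 1)
    (hf : ∀ z : ℂ, ‖z‖ < 1 → HasSum (fun m : ℕ => c m * z ^ m) (f z)) :
    Summable (fun m => ‖c m‖ * r ^ m) := by
  obtain ⟨ρ, hρ0, hrρ, hρ1⟩ : ∃ ρ : ℝ, 0 < ρ ∧ r < ρ ∧ ρ < 1 :=
    ⟨(1 + r) / 2, by linarith, by linarith, by linarith⟩
  have hz : ‖(ρ : ℂ)‖ < 1 := by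
    rw [Complex.norm_real, Real.norm_eq_abs, abs_of_pos hρ0]; exact hρ1
  have hsum := (hf ρ hz).summable
  have h0 : Tendsto (fun m => ‖c m * (ρ:ℂ) ^ m‖) atTop (nhds 0) := by
    simpa using hsum.tendsto_atTop_zero.norm
  obtain ⟨C, hC⟩ := h0.bddAbove_range
  have hCb : ∀ m, ‖c m‖ * ρ ^ m ≤ C := by
    intro m
    have := hC (Set.mem_range_self m)
    simpa [norm_mul, norm_pow, Complex.norm_real, Real.norm_eq_abs,
      abs_of_pos hρ0] using this
  have hgeo : Summable (fun m : ℕ => C * (r / ρ) ^ m) := by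
    refine (summable_geometric_of_lt_one (by positivity) ?_).mul_left C
    rw [div_lt_one hρ0]; exact hrρ
  refine Summable.of_nonneg_of_le (fun m => by positivity) (fun m => ?_) hgeo
  have : ‖c m‖ * r ^ m = (‖c m‖ * ρ ^ m) * (r / ρ) ^ m := by
    rw [div_pow]; field_simp
  rw [this]
  have h1 : (0:ℝ) ≤ (r / ρ) ^ m := by positivity
  calc (‖c m‖ * ρ ^ m) * (r / ρ) ^ m ≤ C * (r / ρ) ^ m :=
    mul_le_mul_of_nonneg_right (hCb m) h1

/-- Orthogonality of roots of unity. -/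
lemma geom_orth (N : ℕ) (hN : 0 < N) (d : ℤ) :
    ∑ t ∈ Finset.range N, Complex.exp (2 * Real.pi * I / N) ^ ((t : ℤ) * d) =
      if (N : ℤ) ∣ d then (N : ℂ) else 0 := by
  set ω : ℂ := Complex.exp (2 * Real.pi * I / N) with hω
  have hprim : IsPrimitiveRoot ω N := Complex.isPrimitiveRoot_exp N hN.ne'
  have hpow : ∀ t : ℕ, ω ^ ((t : ℤ) * d) = (ω ^ d) ^ t := by
    intro t
    rw [mul_comm, zpow_mul, zpow_natCast]
  rw [Finset.sum_congr rfl fun t _ => hpow t]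
  by_cases hdvd : (N : ℤ) ∣ d
  · rw [if_pos hdvd]
    have h1 : ω ^ d = 1 := (hprim.zpow_eq_one_iff_dvd d).mpr hdvd
    simp [h1]
  · rw [if_neg hdvd]
    have hne : ω ^ d ≠ 1 := fun h => hdvd ((hprim.zpow_eq_one_iff_dvd d).mp h)
    rw [geom_sum_eq hne]
    have hNpow : (ω ^ d) ^ N = 1 := by
      rw [← zpow_natCast (ω ^ d) N, ← zpow_mul, mul_comm, zpow_mul, zpow_natCast,
        hprim.pow_eq_one, one_zpow]
    rw [hNpow]
    simp

set_option maxHeartbeats 1000000 in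
/-- Bessel-type inequality via averaging over roots of unity. -/
lemma bessel_bound (c : ℕ → ℂ) (f : ℂ → ℂ) (r L : ℝ)
    (hr0 : 0 ≤ r) (hr1 : r < 1)
    (hf : ∀ z : ℂ, ‖z‖ < 1 → HasSum (fun m : ℕ => c m * z ^ m) (f z))
    (hL : ∀ z : ℂ, ‖z‖ = r → ‖f z‖ ≤ L)
    (S : Finset ℕ) :
    ∑ j ∈ S, ‖c j‖ ^ 2 * r ^ (2 * j) ≤ L ^ 2 := by
  have sumC : Summable (fun m => ‖c m‖ * r ^ m) := sumC_aux c f r hr0 hr1 hf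
  have hL0 : 0 ≤ L := le_trans (norm_nonneg _) (hL (r : ℂ) (by
    rw [Complex.norm_real, Real.norm_eq_abs, _root_.abs_of_nonneg hr0]))
  set T : ℝ := ∑ j ∈ S, ‖c j‖ ^ 2 * r ^ (2 * j) with hTdef
  set D : ℝ := ∑ j ∈ S, ‖c j‖ * r ^ j with hDdef
  have hT0 : 0 ≤ T := Finset.sum_nonneg fun j _ => by positivity
  have hD0 : 0 ≤ D := Finset.sum_nonneg fun j _ => by positivity
  -- the key estimate for each large N
  have key : ∀ N : ℕ, 0 < N → (∀ j ∈ S, j < N) →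
      T ≤ L * Real.sqrt T + D * (∑' m : ℕ, ‖c (m + N)‖ * r ^ (m + N)) := by
    intro N hN hSN
    set ω : ℂ := Complex.exp (2 * Real.pi * I / N) with hωdef
    have hω_ne : ω ≠ 0 := Complex.exp_ne_zero _
    have hωabs : ‖ω‖ = 1 := by
      rw [hωdef, show (2 * (Real.pi:ℂ) * I / N) = ((2 * Real.pi / N : ℝ) : ℂ) * I by
        push_cast; ring]
      exact Complex.norm_exp_ofReal_mul_I _
    have hconjω : (starRingEnd ℂ) ω = ω⁻¹ := (Complex.inv_eq_conj hωabs).symm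
    set z : ℕ → ℂ := fun t => (r : ℂ) * ω ^ t with hzdef
    have hz_norm : ∀ t, ‖z t‖ = r := by
      intro t
      rw [hzdef]
      rw [norm_mul, norm_pow, hωabs, one_pow, mul_one,
        Complex.norm_real, Real.norm_eq_abs, _root_.abs_of_nonneg hr0]
    have hz_lt : ∀ t, ‖z t‖ < 1 := fun t => by rw [hz_norm t]; exact hr1
    set P : ℂ → ℂ := fun w => ∑ j ∈ S, c j * w ^ j with hPdef
    -- powers of z t
    have hzz : ∀ t m k : ℕ, z t ^ m * ((starRingEnd ℂ) (z t)) ^ k =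
        (r : ℂ) ^ (m + k) * ω ^ ((t : ℤ) * ((m : ℤ) - (k : ℤ))) := by
      intro t m k
      have hconjz : (starRingEnd ℂ) (z t) = (r : ℂ) * (ω⁻¹) ^ t := by
        rw [hzdef]
        simp only [map_mul, map_pow, Complex.conj_ofReal, hconjω]
      have hzp : ω ^ (t * m) * (ω ^ (t * k))⁻¹ = ω ^ ((t : ℤ) * ((m : ℤ) - (k : ℤ))) := by
        rw [← zpow_natCast ω (t * m), ← zpow_natCast ω (t * k), ← zpow_neg,
          ← zpow_add₀ hω_ne]
        congr 1
        push_cast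
        ring
      calc z t ^ m * ((starRingEnd ℂ) (z t)) ^ k
          = ((r : ℂ) ^ m * (r : ℂ) ^ k) * (ω ^ (t * m) * (ω ^ (t * k))⁻¹) := by
            rw [hzdef, hconjz]
            simp only [mul_pow, inv_pow, ← pow_mul]
            ring
        _ = (r : ℂ) ^ (m + k) * ω ^ ((t : ℤ) * ((m : ℤ) - (k : ℤ))) := by
            rw [← pow_add, hzp]
    -- inner sum over t
    have hinner : ∀ (m : ℕ) (a : ℂ),
        ∑ t ∈ Finset.range N, a * z t ^ m * (starRingEnd ℂ) (P (z t))
          = ∑ k ∈ S, a * (starRingEnd ℂ) (c k) * (r : ℂ) ^ (m + k) *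
              (if (N : ℤ) ∣ (m : ℤ) - (k : ℤ) then (N : ℂ) else 0) := by
      intro m a
      have expand : ∀ t, a * z t ^ m * (starRingEnd ℂ) (P (z t)) =
          ∑ k ∈ S, (a * (starRingEnd ℂ) (c k) * (r : ℂ) ^ (m + k)) *
            ω ^ ((t : ℤ) * ((m : ℤ) - (k : ℤ))) := by
        intro t
        rw [hPdef]
        simp only [map_sum, map_mul, map_pow, Finset.mul_sum]
        refine Finset.sum_congr rfl fun k hk => ?_
        have : a * z t ^ m * ((starRingEnd ℂ) (c k) * ((starRingEnd ℂ) (z t)) ^ k)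
            = a * (starRingEnd ℂ) (c k) * (z t ^ m * ((starRingEnd ℂ) (z t)) ^ k) := by
          ring
        rw [this, hzz t m k]
        ring
      rw [Finset.sum_congr rfl fun t _ => expand t, Finset.sum_comm]
      refine Finset.sum_congr rfl fun k hk => ?_
      rw [← Finset.mul_sum, geom_orth N hN ((m : ℤ) - (k : ℤ))]
    -- collapsing the divisibility condition for m < N
    have hcollapse : ∀ m : ℕ, m < N → ∀ a : ℂ,
        ∑ k ∈ S, a * (starRingEnd ℂ) (c k) * (r : ℂ) ^ (m + k) *
            (if (N : ℤ) ∣ (m : ℤ) - (k : ℤ) then (N : ℂ) else 0)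
          = if m ∈ S then a * (starRingEnd ℂ) (c m) * (r : ℂ) ^ (2 * m) * N else 0 := by
      intro m hm a
      have hterm : ∀ k ∈ S, a * (starRingEnd ℂ) (c k) * (r : ℂ) ^ (m + k) *
          (if (N : ℤ) ∣ (m : ℤ) - (k : ℤ) then (N : ℂ) else 0)
          = if k = m then a * (starRingEnd ℂ) (c m) * (r : ℂ) ^ (2 * m) * N else 0 := by
        intro k hk
        by_cases hkm : k = m
        · subst hkm
          rw [if_pos rfl, if_pos (by simp)]
          rw [show k + k = 2 * k by ring]
        · rw [if_neg hkm]
          have hnd : ¬ (N : ℤ) ∣ (m : ℤ) - (k : ℤ) := by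
            intro hd
            have hkN : k < N := hSN k hk
            have : (m : ℤ) - (k : ℤ) = 0 := by
              refine Int.eq_zero_of_dvd_of_natAbs_lt_natAbs hd ?_
              omega
            exact hkm (by omega)
          rw [if_neg hnd, mul_zero]
      rw [Finset.sum_congr rfl hterm, Finset.sum_ite_eq' S m
        (fun _ => a * (starRingEnd ℂ) (c m) * (r : ℂ) ^ (2 * m) * N)]
    -- the common diagonal value
    have hdiag : ∑ j ∈ S, c j * (starRingEnd ℂ) (c j) * (r : ℂ) ^ (2 * j) * N
        = ((T : ℝ) : ℂ) * N := by
      rw [hTdef]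
      push_cast
      rw [Finset.sum_mul]
      refine Finset.sum_congr rfl fun j hj => ?_
      rw [Complex.mul_conj]
      rw [Complex.normSq_eq_norm_sq]
      push_cast
      ring
    -- polynomial Parseval
    have hP2 : ∑ t ∈ Finset.range N, ‖P (z t)‖ ^ 2 = N * T := by
      have hc : ∑ t ∈ Finset.range N, P (z t) * (starRingEnd ℂ) (P (z t))
          = ((T : ℝ) : ℂ) * N := by
        have h1 : ∀ t ∈ Finset.range N, P (z t) * (starRingEnd ℂ) (P (z t))
            = ∑ j ∈ S, c j * z t ^ j * (starRingEnd ℂ) (P (z t)) := by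
          intro t _
          rw [hPdef]
          rw [Finset.sum_mul]
        rw [Finset.sum_congr rfl h1, Finset.sum_comm]
        rw [Finset.sum_congr rfl fun j hj => hinner j (c j)]
        rw [Finset.sum_congr rfl fun j hj => hcollapse j (hSN j hj) (c j)]
        rw [Finset.sum_congr rfl fun j (hj : j ∈ S) => if_pos hj]
        exact hdiag
      have h2 : ∀ t, ‖P (z t)‖ ^ 2 = (P (z t) * (starRingEnd ℂ) (P (z t))).re := by
        intro t
        rw [Complex.mul_conj, Complex.normSq_eq_norm_sq, Complex.ofReal_re]
      rw [Finset.sum_congr rfl fun t _ => h2 t, ← Complex.re_sum, hc]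
      simp [mul_comm]
    -- the coefficient functional with tail
    set g : ℕ → ℂ := fun m => ∑ k ∈ S, c m * (starRingEnd ℂ) (c k) * (r : ℂ) ^ (m + k) *
        (if (N : ℤ) ∣ (m : ℤ) - (k : ℤ) then (N : ℂ) else 0) with hgdef
    have hgnorm : ∀ m, ‖g m‖ ≤ N * D * (‖c m‖ * r ^ m) := by
      intro m
      rw [hgdef]
      refine le_trans (norm_sum_le _ _) ?_
      have hpt : ∀ k ∈ S, ‖c m * (starRingEnd ℂ) (c k) * (r : ℂ) ^ (m + k) *
          (if (N : ℤ) ∣ (m : ℤ) - (k : ℤ) then (N : ℂ) else 0)‖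
          ≤ (‖c m‖ * r ^ m) * N * (‖c k‖ * r ^ k) := by
        intro k hk
        rw [norm_mul, norm_mul, norm_mul]
        have hite : ‖(if (N : ℤ) ∣ (m : ℤ) - (k : ℤ) then (N : ℂ) else 0)‖ ≤ N := by
          split <;> simp
        have hrn : ‖(r : ℂ) ^ (m + k)‖ = r ^ (m + k) := by
          rw [norm_pow, Complex.norm_real, Real.norm_eq_abs, _root_.abs_of_nonneg hr0]
        rw [hrn, RCLike.norm_conj]
        calc ‖c m‖ * ‖c k‖ * r ^ (m + k) *
              ‖(if (N : ℤ) ∣ (m : ℤ) - (k : ℤ) then (N : ℂ) else 0)‖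
            ≤ ‖c m‖ * ‖c k‖ * r ^ (m + k) * N := by
              refine mul_le_mul_of_nonneg_left hite (by positivity)
          _ = (‖c m‖ * r ^ m) * N * (‖c k‖ * r ^ k) := by
              rw [pow_add]; ring
      refine le_trans (Finset.sum_le_sum hpt) ?_
      rw [← Finset.mul_sum, hDdef]
      ring_nf
      exact le_of_eq (by ring)
    have hgsummable : Summable g := by
      refine Summable.of_norm_bounded ((sumC.mul_left (N * D))) hgnorm
    -- the main identity : sum over roots of f * conj P
    have hfP : ∑ t ∈ Finset.range N, f (z t) * (starRingEnd ℂ) (P (z t)) = ∑' m, g m := by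
      have h1 : ∀ t ∈ Finset.range N, f (z t) * (starRingEnd ℂ) (P (z t))
          = ∑' m, c m * z t ^ m * (starRingEnd ℂ) (P (z t)) := by
        intro t _
        exact (((hf (z t) (hz_lt t)).mul_right _).tsum_eq).symm
      rw [Finset.sum_congr rfl h1]
      rw [← Summable.tsum_finsetSum (fun t _ => ((hf (z t) (hz_lt t)).mul_right _).summable)]
      exact tsum_congr fun m => hinner m (c m)
    -- split the tsum of g
    have hsplit : ∑ m ∈ Finset.range N, g m + ∑' m, g (m + N) = ∑' m, g m :=
      Summable.sum_add_tsum_nat_add N hgsummable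
    have hhead : ∑ m ∈ Finset.range N, g m = ((T : ℝ) : ℂ) * N := by
      have h1 : ∀ m ∈ Finset.range N, g m =
          if m ∈ S then c m * (starRingEnd ℂ) (c m) * (r : ℂ) ^ (2 * m) * N else 0 := by
        intro m hm
        rw [hgdef]
        exact hcollapse m (Finset.mem_range.mp hm) (c m)
      rw [Finset.sum_congr rfl h1, Finset.sum_ite_mem,
        Finset.inter_eq_right.mpr (fun j hj => Finset.mem_range.mpr (hSN j hj))]
      exact hdiag
    -- tail bound
    have htail_summable : Summable (fun m => ‖c (m + N)‖ * r ^ (m + N)) :=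
      (summable_nat_add_iff N).mpr sumC
    have htail : ‖∑' m, g (m + N)‖ ≤ N * D * (∑' m, ‖c (m + N)‖ * r ^ (m + N)) := by
      have hs1 : Summable (fun m => ‖g (m + N)‖) := by
        refine Summable.of_nonneg_of_le (fun m => norm_nonneg _)
          (fun m => hgnorm (m + N)) ?_
        exact htail_summable.mul_left (N * D)
      refine le_trans (norm_tsum_le_tsum_norm hs1) ?_
      rw [← tsum_mul_left]
      exact Summable.tsum_le_tsum (fun m => hgnorm (m + N)) hs1 (htail_summable.mul_left (N * D))
    -- Cauchy-Schwarz bound on the average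
    have hCS : ‖∑ t ∈ Finset.range N, f (z t) * (starRingEnd ℂ) (P (z t))‖
        ≤ L * (N * Real.sqrt T) := by
      refine le_trans (norm_sum_le _ _) ?_
      have hpt : ∀ t ∈ Finset.range N, ‖f (z t) * (starRingEnd ℂ) (P (z t))‖
          ≤ L * ‖P (z t)‖ := by
        intro t _
        rw [norm_mul, RCLike.norm_conj]
        exact mul_le_mul_of_nonneg_right (hL (z t) (hz_norm t)) (norm_nonneg _)
      refine le_trans (Finset.sum_le_sum hpt) ?_
      rw [← Finset.mul_sum]
      refine mul_le_mul_of_nonneg_left ?_ hL0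
      -- ∑ t ‖P (z t)‖ ≤ N * sqrt T
      have hcs2 : (∑ t ∈ Finset.range N, ‖P (z t)‖) ^ 2 ≤ (N : ℝ) * (N * T) := by
        have hcs := Finset.sum_mul_sq_le_sq_mul_sq (Finset.range N)
          (fun _ => (1 : ℝ)) (fun t => ‖P (z t)‖)
        simp only [one_mul, one_pow] at hcs
        rw [Finset.sum_const, Finset.card_range, nsmul_eq_mul, mul_one] at hcs
        rw [hP2] at hcs
        exact hcs
      have hnn : 0 ≤ ∑ t ∈ Finset.range N, ‖P (z t)‖ :=
        Finset.sum_nonneg fun t _ => norm_nonneg _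
      have : ∑ t ∈ Finset.range N, ‖P (z t)‖ ≤ Real.sqrt ((N : ℝ) * (N * T)) := by
        rw [← Real.sqrt_sq hnn]
        exact Real.sqrt_le_sqrt hcs2
      refine le_trans this (le_of_eq ?_)
      rw [show (N : ℝ) * (N * T) = (N : ℝ) ^ 2 * T by ring, Real.sqrt_mul (by positivity),
        Real.sqrt_sq (by positivity)]
    -- combine
    have hNT : (N : ℝ) * T ≤ L * (N * Real.sqrt T) + N * D * (∑' m, ‖c (m + N)‖ * r ^ (m + N)) := by
      have h1 : ((T : ℝ) : ℂ) * N = (∑ t ∈ Finset.range N, f (z t) * (starRingEnd ℂ) (P (z t)))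
          - ∑' m, g (m + N) := by
        rw [hfP, ← hsplit, hhead]
        ring
      have h2 : (N : ℝ) * T = ‖((T : ℝ) : ℂ) * (N : ℂ)‖ := by
        rw [norm_mul, Complex.norm_real, Real.norm_eq_abs, _root_.abs_of_nonneg hT0]
        simp [mul_comm]
      rw [h2, h1]
      refine le_trans (norm_sub_le _ _) ?_
      exact add_le_add hCS htail
    have hNpos : (0 : ℝ) < N := by exact_mod_cast hN
    have := hNT
    nlinarith [this]
  -- pass to the limit in N
  have htail0 : Filter.Tendsto (fun N : ℕ => D * (∑' m, ‖c (m + N)‖ * r ^ (m + N)))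
      Filter.atTop (nhds 0) := by
    have := tendsto_sum_nat_add (fun m => ‖c m‖ * r ^ m)
    simpa using (this.const_mul D)
  have hev : ∀ᶠ N : ℕ in Filter.atTop,
      T - L * Real.sqrt T ≤ D * (∑' m, ‖c (m + N)‖ * r ^ (m + N)) := by
    filter_upwards [Filter.eventually_ge_atTop ((S.sup id) + 1)] with N hNge
    have hN : 0 < N := lt_of_lt_of_le (Nat.succ_pos _) hNge
    have hSN : ∀ j ∈ S, j < N := by
      intro j hj
      have : j ≤ S.sup id := Finset.le_sup (f := id) hj
      omega
    linarith [key N hN hSN]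
  have hfin : T - L * Real.sqrt T ≤ 0 := ge_of_tendsto htail0 hev
  -- conclude T ≤ L ^ 2
  rcases eq_or_lt_of_le hT0 with hT | hT
  · rw [← hT]; positivity
  · have hsq : Real.sqrt T * Real.sqrt T = T := Real.mul_self_sqrt hT0
    have hsp : 0 < Real.sqrt T := Real.sqrt_pos.mpr hT
    have h1 : Real.sqrt T ≤ L := by
      nlinarith
    calc T = Real.sqrt T * Real.sqrt T := hsq.symm
      _ ≤ L * L := mul_le_mul h1 h1 (le_of_lt hsp) hL0
      _ = L ^ 2 := by ring

/-- Theorem 2.1 (solid hull, necessity direction).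
If a weight `v` on the unit disc and a strictly increasing sequence of positive
integers `(m_n)` satisfy `k ≤ A(m_n, m_{n+1}) ≤ K`, `k ≤ B(m_n, m_{n+1}) ≤ K`
for some `2 < k ≤ K`, then every sequence dominated coordinatewise by the Taylor
coefficients of some `f ∈ H_v^∞(𝔻)` satisfies the stated sup-condition. -/
theorem stmt_0
    (v : ℝ → ℝ)
    (hv_cont : ContinuousOn v (Set.Ico 0 1))
    (hv_pos : ∀ r ∈ Set.Ico (0:ℝ) 1, 0 < v r)
    (hv_mono : ∀ r s : ℝ, 0 ≤ r → r ≤ s → s < 1 → v s ≤ v r)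
    (hv_lim : Filter.Tendsto v (nhdsWithin 1 (Set.Iio 1)) (nhds 0))
    (rr : ℕ → ℝ)
    (hrr : ∀ m : ℕ, 0 < m → rr m ∈ Set.Ico (0:ℝ) 1 ∧
      IsMaxOn (fun r => r ^ m * v r) (Set.Ico 0 1) (rr m))
    (mseq : ℕ → ℕ)
    (hm_pos : ∀ n : ℕ, 0 < mseq n)
    (hm_mono : StrictMono mseq)
    (hm_tend : Filter.Tendsto (fun n => (mseq n : ℝ)) Filter.atTop Filter.atTop)
    (k K : ℝ) (hk : 2 < k) (hkK : k ≤ K)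
    (hA : ∀ n : ℕ,
      k ≤ (rr (mseq n) / rr (mseq (n+1))) ^ (mseq n) *
            (v (rr (mseq n)) / v (rr (mseq (n+1)))) ∧
      (rr (mseq n) / rr (mseq (n+1))) ^ (mseq n) *
            (v (rr (mseq n)) / v (rr (mseq (n+1)))) ≤ K)
    (hB : ∀ n : ℕ,
      k ≤ (rr (mseq (n+1)) / rr (mseq n)) ^ (mseq (n+1)) *
            (v (rr (mseq (n+1))) / v (rr (mseq n))) ∧
      (rr (mseq (n+1)) / rr (mseq n)) ^ (mseq (n+1)) *
            (v (rr (mseq (n+1))) / v (rr (mseq n))) ≤ K)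
    (b : ℕ → ℂ)
    (hb : ∃ (f : ℂ → ℂ) (c : ℕ → ℂ),
      (∀ z : ℂ, ‖z‖ < 1 → HasSum (fun m : ℕ => c m * z ^ m) (f z)) ∧
      (∃ M : ℝ, ∀ z : ℂ, ‖z‖ < 1 → v ‖z‖ * ‖f z‖ ≤ M) ∧
      (∀ m : ℕ, ‖b m‖ ≤ ‖c m‖)) :
    ∃ C : ℝ, ∀ n : ℕ,
      v (rr (mseq n)) *
        Real.sqrt (∑ j ∈ Finset.Ioc (mseq n) (mseq (n+1)),
          ‖b j‖ ^ 2 * rr (mseq n) ^ (2 * j)) ≤ C := by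
  obtain ⟨f, c, hf, ⟨M, hM⟩, hdom⟩ := hb
  have hM0 : 0 ≤ M := by
    have h0 := hM 0 (by norm_num)
    have hv0 : 0 < v ‖(0:ℂ)‖ := by
      simpa using hv_pos 0 (by norm_num)
    nlinarith [norm_nonneg (f 0)]
  refine ⟨M, fun n => ?_⟩
  obtain ⟨hrIco, _⟩ := hrr (mseq n) (hm_pos n)
  set r : ℝ := rr (mseq n) with hrdef
  have hr0 : 0 ≤ r := hrIco.1
  have hr1 : r < 1 := hrIco.2
  have hvr : 0 < v r := hv_pos r hrIco
  have hL : ∀ z : ℂ, ‖z‖ = r → ‖f z‖ ≤ M / v r := by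
    intro z hz
    have h1 := hM z (by rw [hz]; exact hr1)
    rw [hz] at h1
    rw [le_div_iff₀ hvr]
    linarith
  have hbessel := bessel_bound c f r (M / v r) hr0 hr1 hf hL
    (Finset.Ioc (mseq n) (mseq (n+1)))
  have hdom2 : ∑ j ∈ Finset.Ioc (mseq n) (mseq (n+1)), ‖b j‖ ^ 2 * r ^ (2 * j)
      ≤ ∑ j ∈ Finset.Ioc (mseq n) (mseq (n+1)), ‖c j‖ ^ 2 * r ^ (2 * j) := by
    refine Finset.sum_le_sum fun j _ => ?_
    have h1 := hdom j
    have h2 : ‖b j‖ ^ 2 ≤ ‖c j‖ ^ 2 := by nlinarith [norm_nonneg (b j)]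
    exact mul_le_mul_of_nonneg_right h2 (by positivity)
  have hsq : Real.sqrt (∑ j ∈ Finset.Ioc (mseq n) (mseq (n+1)),
      ‖b j‖ ^ 2 * r ^ (2 * j)) ≤ M / v r := by
    have h1 := Real.sqrt_le_sqrt (le_trans hdom2 hbessel)
    rwa [Real.sqrt_sq (by positivity)] at h1
  calc v r * Real.sqrt (∑ j ∈ Finset.Ioc (mseq n) (mseq (n+1)),
        ‖b j‖ ^ 2 * r ^ (2 * j))
      ≤ v r * (M / v r) := mul_le_mul_of_nonneg_left hsq (le_of_lt hvr)
    _ = M := by field_simp
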